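/- Existence of the encoding matrix B in the numerically stable construction (Section 5): Let n, d, m be positive integers with m ≤ d ≤ n and set s = d − m. Let V be an (n − s) × n real matrix. For i ∈ {1, …, n}, let Sᵢ be the (n − d) × (n − d) submatrix of V formed by rows 1, …, n − d and the circularly consecutive columns i, i ⊕ 1, …, i ⊕ (n − d − 1). Suppose every Sᵢ is invertible. Then there exists an (mn) × (n − s) real matrix B such that: (i) the last m columns of B equal n vertically stacked copies of the m × m identity matrix I_m; and (ii) for every data-subset index j ∈ {1, …, n} and every worker index i ∈ {1, …, n} with j ∉ {i, i ⊕ 1, …, i ⊕ (d − 1)}, every entry of the product B·V lying in rows (j−1)m + 1, …, jm and column i is zero. -/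

import Mathlib

open Fin.NatCast in
/-- Existence of the encoding matrix `B` in the numerically stable construction
(Section 5). Given an `(n − s) × n` matrix `V` (with `s = d − m`) all of whose
`(n − d) × (n − d)` submatrices `Sᵢ` — formed by the first `n − d` rows and the
circularly consecutive columns `i, i⊕1, …, i⊕(n−d−1)` — are invertible, there is
an `(mn) × (n − s)` matrix `B` (rows indexed by pairs `(j, u)`, corresponding to
row `(j−1)m + u`) such that:
(i) the last `m` columns of `B` are `n` stacked copies of `I_m`; and
(ii) for every data-subset index `j` and worker index `i` with
`j ∉ {i, i⊕1, …, i⊕(d−1)}`, the entries of `B·V` in rows `(j−1)m+1, …, jm` and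
column `i` are all zero. -/
theorem exists_encoding_matrix_stable
    (n d m s : ℕ) [NeZero n] (hm : 0 < m) (hmd : m ≤ d) (hdn : d ≤ n)
    (hs : s = d - m)
    (V : Matrix (Fin (n - s)) (Fin n) ℝ)
    (hV : ∀ i : Fin n,
      IsUnit (Matrix.of fun r c : Fin (n - d) =>
        V (Fin.castLE (by omega) r) (i + (c.val : Fin n)))) :
    ∃ B : Matrix (Fin n × Fin m) (Fin (n - s)) ℝ,
      (∀ (i : Fin n) (u u' : Fin m),
        B (i, u) ⟨n - d + u'.val, by have := u'.isLt; omega⟩ =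
          if u = u' then 1 else 0) ∧
      (∀ (j i : Fin n), (∀ t ∈ Finset.range d, j ≠ i + (t : Fin n)) →
        ∀ u : Fin m, (B * V) (j, u) i = 0) := by
  have hnd : n - d ≤ n - s := by omega
  have he : n - d + m = n - s := by omega
  set S : Fin n → Matrix (Fin (n - d)) (Fin (n - d)) ℝ :=
    fun j => Matrix.of fun r c => V (Fin.castLE hnd r) ((j + 1) + (c.val : Fin n)) with hSdef
  have hSunit : ∀ j : Fin n, IsUnit (S j) := fun j => hV (j + 1)
  set W : Fin n → Matrix (Fin m) (Fin (n - d)) ℝ :=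
    fun j => Matrix.of fun u c =>
      V ⟨n - d + u.val, by have := u.isLt; omega⟩ ((j + 1) + (c.val : Fin n)) with hWdef
  set X : Fin n → Matrix (Fin m) (Fin (n - d)) ℝ := fun j => -(W j) * (S j)⁻¹ with hXdef
  have hXS : ∀ j, X j * S j = -(W j) := by
    intro j
    rw [hXdef]
    rw [Matrix.mul_assoc,
      Matrix.nonsing_inv_mul _ ((Matrix.isUnit_iff_isUnit_det _).mp (hSunit j)),
      Matrix.mul_one]
  set B : Matrix (Fin n × Fin m) (Fin (n - s)) ℝ :=
    fun p k => if h : (k : ℕ) < n - d then X p.1 p.2 ⟨k, h⟩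
      else if (k : ℕ) = n - d + p.2.val then 1 else 0 with hBdef
  refine ⟨B, ?_, ?_⟩
  · intro i u u'
    have h1 : ¬ ((n - d + u'.val) < n - d) := by omega
    simp only [hBdef, dif_neg h1]
    by_cases h : u = u'
    · subst h; simp
    · have h2 : ¬ (n - d + u'.val = n - d + u.val) := by
        intro hc
        exact h (Fin.ext (by omega)).symm
      simp [h, h2, Fin.val_inj, Ne.symm h]
  · intro j i hbad u
    obtain ⟨c0, hc0⟩ : ∃ c0 : Fin (n - d), i = (j + 1) + (c0.val : Fin n) := by
      set t : Fin n := i - (j + 1) with htdef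
      have ht : i = (j + 1) + t := by rw [htdef]; abel
      have htlt : t.val < n - d := by
        by_contra hge
        push_neg at hge
        set k := n - t.val - 1 with hkdef
        have hk : k < d := by have := t.isLt; omega
        apply hbad k (Finset.mem_range.mpr hk)
        have h1 : (1 : Fin n) + t + (k : Fin n) = 0 := by
          have e1 : ((1 + t.val + k : ℕ) : Fin n) = ((n : ℕ) : Fin n) := by
            congr 1; have := t.isLt; omega
          calc (1 : Fin n) + t + (k : Fin n)
              = ((1 + t.val + k : ℕ) : Fin n) := by
                push_cast [Fin.cast_val_eq_self]; abel
            _ = 0 := by rw [e1, Fin.natCast_self]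
        calc j = j + ((1 : Fin n) + t + (k : Fin n)) := by rw [h1, add_zero]
          _ = (j + 1 + t) + (k : Fin n) := by abel
          _ = i + (k : Fin n) := by rw [← ht]
      exact ⟨⟨t.val, htlt⟩, by simpa [Fin.cast_val_eq_self] using ht⟩
    rw [Matrix.mul_apply]
    have hsplit : ∑ k : Fin (n - s), (B (j, u) k * V k i)
        = ∑ k : Fin (n - d + m), (B (j, u) (Fin.cast he k) * V (Fin.cast he k) i) :=
      (Fintype.sum_equiv (finCongr he) _ _ (fun k => rfl)).symm
    rw [hsplit, Fin.sum_univ_add]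
    have h1 : ∀ c : Fin (n - d),
        B (j, u) (Fin.cast he (Fin.castAdd m c)) * V (Fin.cast he (Fin.castAdd m c)) i
          = X j u c * S j c c0 := by
      intro c
      have hlt : ((Fin.cast he (Fin.castAdd m c) : Fin (n - s)) : ℕ) < n - d := c.isLt
      rw [hBdef]
      simp only [dif_pos hlt]
      rw [hc0]
      rfl
    have h2 : ∀ u' : Fin m,
        B (j, u) (Fin.cast he (Fin.natAdd (n - d) u')) * V (Fin.cast he (Fin.natAdd (n - d) u')) i
          = (if u' = u then 1 else 0) * V (Fin.cast he (Fin.natAdd (n - d) u')) i := by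
      intro u'
      have hge : ¬ (((Fin.cast he (Fin.natAdd (n - d) u') : Fin (n - s)) : ℕ) < n - d) := by
        simp only [Fin.coe_cast, Fin.coe_natAdd]
        omega
      rw [hBdef]
      simp only [dif_neg hge]
      congr 1
      simp only [Fin.coe_cast, Fin.coe_natAdd]
      by_cases h : u' = u
      · subst h; simp
      · have : ¬ (n - d + u'.val = n - d + u.val) := fun hc => h (Fin.ext (by omega))
        simp [h, this, Fin.val_inj]
    simp only [h1]
    rw [Finset.sum_congr rfl (fun u' _ => h2 u')]
    have h3 : ∑ u' : Fin m, (if u' = u then (1:ℝ) else 0) * V (Fin.cast he (Fin.natAdd (n - d) u')) i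
        = V (Fin.cast he (Fin.natAdd (n - d) u)) i := by
      simp [ite_mul, Finset.sum_ite_eq']
    rw [h3, ← Matrix.mul_apply, hXS]
    have h4 : V (Fin.cast he (Fin.natAdd (n - d) u)) i = W j u c0 := by
      rw [hc0]; rfl
    rw [h4, Matrix.neg_apply]
    ring
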